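/- Let n_rad ≥ 1, n_orb ≥ 1, n = n_rad + n_orb, fix 1 ≤ y ≤ n_rad, and let Z_y = I₂^{⊗(y−1)} ⊗ Z ⊗ I₂^{⊗(n−y)}. For each sign ε ∈ {+1,−1}, the sum over all nontrivial Pauli strings P on n_rad qubits (P ≠ I₂^{⊗ n_rad}) of |⟨B_P^{(ε)}, Z_y⟩_HS|², where B_P^{(ε)} = 2^{−n/2} · P ⊗ ((I₂ + ε·Z)/√2) ⊗ I₂^{⊗(n_orb−1)}, equals 2^{n−1}. (This is the 𝔤_±-purity of the measured observable Z_y.) -/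

import Mathlib

open Matrix Complex

attribute [local instance 100] LieRing.ofAssociativeRing

noncomputable section

abbrev QMat (n : ℕ) := Matrix (Fin n → Fin 2) (Fin n → Fin 2) ℂ

def PX : Matrix (Fin 2) (Fin 2) ℂ := !![0, 1; 1, 0]
def PY : Matrix (Fin 2) (Fin 2) ℂ := !![0, -Complex.I; Complex.I, 0]
def PZ : Matrix (Fin 2) (Fin 2) ℂ := !![1, 0; 0, -1]

/-- The tensor (Kronecker) product of a family of single-qubit matrices. -/
def tens {n : ℕ} (As : Fin n → Matrix (Fin 2) (Fin 2) ℂ) : QMat n :=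
  Matrix.of fun f g => ∏ k, As k (f k) (g k)

/-- A single-qubit matrix `A` acting on qubit `j` (tensored with identity elsewhere). -/
def onQubit {n : ℕ} (A : Matrix (Fin 2) (Fin 2) ℂ) (j : Fin n) : QMat n :=
  tens fun k => if k = j then A else 1

/-- The Kronecker product of an `a`-qubit matrix and a `b`-qubit matrix. -/
def kron {a b : ℕ} (M : QMat a) (N : QMat b) : QMat (a + b) :=
  Matrix.of fun f g =>
    M (fun i => f (Fin.castAdd b i)) (fun i => g (Fin.castAdd b i)) *
      N (fun i => f (Fin.natAdd a i)) (fun i => g (Fin.natAdd a i))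

/-- The generator of the CZ gate on qubits `j`, `j'`. -/
def czGen {n : ℕ} (j j' : Fin n) : QMat n :=
  (-(Real.pi / 4) : ℂ) • (1 - onQubit PZ j - onQubit PZ j' + onQubit PZ j * onQubit PZ j')

/-- The generators of the rotationally equivariant model: `i X_j, i Y_j, i Z_j` on the
first `nrad` qubits, and `i cz_{j,j+1}` for all neighbouring pairs. -/
def genSet (nrad norb : ℕ) : Set (QMat (nrad + norb)) :=
  {M | ∃ j : Fin (nrad + norb), (j : ℕ) < nrad ∧
      (M = Complex.I • onQubit PX j ∨ M = Complex.I • onQubit PY j ∨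
        M = Complex.I • onQubit PZ j)} ∪
  {M | ∃ (j : ℕ) (h : j + 1 < nrad + norb),
      M = Complex.I • czGen ⟨j, lt_of_le_of_lt (Nat.le_succ j) h⟩ ⟨j + 1, h⟩}

/-- The dynamical Lie algebra: the smallest real Lie subalgebra of the `2^n × 2^n` complex
matrices containing the generators. -/
def DLA (nrad norb : ℕ) : LieSubalgebra ℝ (QMat (nrad + norb)) :=
  LieSubalgebra.lieSpan ℝ _ (genSet nrad norb)


/-- The Hilbert–Schmidt inner product `⟨A, B⟩ = Tr(Aᴴ B)`. -/
def hsInner {n : ℕ} (A B : QMat n) : ℂ := (Aᴴ * B).trace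

/-- The four single-qubit Pauli matrices `I₂, X, Y, Z`. -/
def pauli : Fin 4 → Matrix (Fin 2) (Fin 2) ℂ := ![1, PX, PY, PZ]

/-- `B_P^{(ε)} = 2^{-n/2} P ⊗ ((I₂ + ε Z)/√2) ⊗ I₂^{⊗(n_orb-1)}`. -/
def Bbasis (nrad norb : ℕ) (hb : 0 < norb) (P : QMat nrad) (ε : ℂ) : QMat (nrad + norb) :=
  ((Real.sqrt (2 ^ (nrad + norb)))⁻¹ : ℝ) •
    kron P (onQubit (((Real.sqrt 2)⁻¹ : ℝ) • ((1 : Matrix (Fin 2) (Fin 2) ℂ) + ε • PZ))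
      (⟨0, hb⟩ : Fin norb))

lemma hs_tens {n : ℕ} (As Bs : Fin n → Matrix (Fin 2) (Fin 2) ℂ) :
    hsInner (tens As) (tens Bs) = ∏ k, ((As k)ᴴ * (Bs k)).trace := by
  have h1 : ∀ k, ((As k)ᴴ * (Bs k)).trace
      = ∑ a : Fin 2, ∑ b : Fin 2, star (As k b a) * Bs k b a := by
    intro k
    simp [Matrix.trace, Matrix.diag, Matrix.mul_apply, Matrix.conjTranspose_apply]
  simp only [h1, Fintype.prod_sum]
  simp [hsInner, Matrix.trace, Matrix.diag, Matrix.mul_apply, Matrix.conjTranspose_apply,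
    tens, Finset.prod_mul_distrib]

lemma kron_tens {a b : ℕ} (As : Fin a → Matrix (Fin 2) (Fin 2) ℂ)
    (Bs : Fin b → Matrix (Fin 2) (Fin 2) ℂ) :
    kron (tens As) (tens Bs) = tens (Fin.addCases As Bs) := by
  ext f g
  simp [kron, tens, Fin.prod_univ_add]

lemma trace_pauli_conj (a : Fin 4) : ((pauli a)ᴴ).trace = if a = 0 then 2 else 0 := by
  fin_cases a <;>
    simp [pauli, PX, PY, PZ, Matrix.trace_fin_two, Matrix.conjTranspose_apply] <;> norm_num

lemma trace_pauli_conj_Z (a : Fin 4) : ((pauli a)ᴴ * PZ).trace = if a = 3 then 2 else 0 := by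
  fin_cases a <;>
    simp [pauli, PX, PY, PZ, Matrix.trace_fin_two, Matrix.mul_apply, Fin.sum_univ_two,
      Matrix.conjTranspose_apply, Matrix.one_apply] <;> norm_num

lemma trace_Q0 (ε : ℂ) :
    ((((Real.sqrt 2)⁻¹ : ℝ) • ((1 : Matrix (Fin 2) (Fin 2) ℂ) + ε • PZ))ᴴ).trace
      = (((Real.sqrt 2)⁻¹ : ℝ) : ℂ) * 2 := by
  simp [Matrix.trace_fin_two, Matrix.conjTranspose_apply, Matrix.smul_apply, Matrix.add_apply,
    Matrix.one_apply, PZ, Complex.star_def]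
noncomputable section
lemma hs_smul {n : ℕ} (c : ℂ) (A B : QMat n) : hsInner (c • A) B = star c * hsInner A B := by
  simp [hsInner, Matrix.conjTranspose_smul, Matrix.smul_mul, Matrix.trace_smul, smul_eq_mul]

lemma real_smul_mat {n : ℕ} (r : ℝ) (M : QMat n) : r • M = (r : ℂ) • M := by
  ext f g; simp [Complex.real_smul]

lemma final_num (a b : ℕ) :
    ((Real.sqrt (2 ^ (a + 1 + (b + 1))))⁻¹ * (2 * 2 ^ a) * ((Real.sqrt 2)⁻¹ * 2 * 2 ^ b)) ^ 2
      = 2 ^ (a + b + 1) := by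
  have hS : Real.sqrt (2 ^ (a + 1 + (b + 1))) ^ 2 = 2 ^ (a + 1 + (b + 1)) :=
    Real.sq_sqrt (by positivity)
  have hs2 : Real.sqrt 2 ^ 2 = 2 := Real.sq_sqrt (by norm_num)
  have hSpos : (0:ℝ) < Real.sqrt (2 ^ (a + 1 + (b + 1))) := Real.sqrt_pos.2 (by positivity)
  have hs2pos : (0:ℝ) < Real.sqrt 2 := by positivity
  rw [mul_pow, mul_pow, mul_pow, mul_pow, mul_pow, inv_pow, inv_pow, hS, hs2]
  rw [← pow_mul, ← pow_mul]
  field_simp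
  ring_nf

/-- For a radial qubit `y` and sign `ε ∈ {1,-1}`, the sum over all
nontrivial Pauli strings `P` on the radial qubits of `|⟨B_P^{(ε)}, Z_y⟩|²` equals
`2^{n-1}` (the `𝔤_±`-purity of the observable `Z_y`). -/
theorem purity_Zy (nrad norb : ℕ) (h1 : 1 ≤ nrad) (h2 : 1 ≤ norb)
    (y : Fin (nrad + norb)) (hy : (y : ℕ) < nrad)
    (ε : ℂ) (hε : ε = 1 ∨ ε = -1) :
    ∑ ps ∈ Finset.univ.filter
        (fun ps : Fin nrad → Fin 4 => tens (fun i => pauli (ps i)) ≠ 1),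
      ‖hsInner (Bbasis nrad norb h2 (tens fun i => pauli (ps i)) ε)
          (onQubit PZ y)‖ ^ 2
      = 2 ^ (nrad + norb - 1) := by
  classical
  set y' : Fin nrad := ⟨y, hy⟩ with hy'def
  set δ : Fin nrad → Fin 4 := fun i => if i = y' then 3 else 0 with hδdef
  set c : ℝ := (Real.sqrt (2 ^ (nrad + norb)))⁻¹ with hcdef
  set s : ℝ := (Real.sqrt 2)⁻¹ with hsdef
  set Q0 : Matrix (Fin 2) (Fin 2) ℂ :=
    (s : ℝ) • ((1 : Matrix (Fin 2) (Fin 2) ℂ) + ε • PZ) with hQ0def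
  have key : ∀ ps : Fin nrad → Fin 4,
      hsInner (Bbasis nrad norb h2 (tens fun i => pauli (ps i)) ε) (onQubit PZ y)
      = if ps = δ then ((c * (2 * 2 ^ (nrad - 1)) * (s * 2 * 2 ^ (norb - 1)) : ℝ) : ℂ)
        else 0 := by
    intro ps
    have hB : Bbasis nrad norb h2 (tens fun i => pauli (ps i)) ε
        = (c : ℂ) • tens (Fin.addCases (fun i => pauli (ps i))
            (fun k : Fin norb => if k = (⟨0, h2⟩ : Fin norb) then Q0 else 1)) := by
      rw [show Bbasis nrad norb h2 (tens fun i => pauli (ps i)) ε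
          = c • kron (tens fun i => pauli (ps i))
              (tens fun k : Fin norb => if k = (⟨0, h2⟩ : Fin norb) then Q0 else 1) from rfl,
        kron_tens, real_smul_mat]
    rw [hB, show onQubit PZ y = tens (fun k => if k = y then PZ else 1) from rfl,
      hs_smul, hs_tens, Fin.prod_univ_add]
    have hcast : ∀ i : Fin nrad, ((Fin.castAdd norb i = y)) ↔ (i = y') := by
      intro i; simp [Fin.ext_iff, hy'def]
    have hnat : ∀ i : Fin norb, ¬ (Fin.natAdd nrad i = y) := by
      intro i h
      rw [Fin.ext_iff] at h
      simp [Fin.natAdd] at h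
      omega
    have hrad : (∏ i : Fin nrad,
        ((Fin.addCases (fun i => pauli (ps i))
            (fun k : Fin norb => if k = (⟨0, h2⟩ : Fin norb) then Q0 else 1)
            (Fin.castAdd norb i))ᴴ *
          (if Fin.castAdd norb i = y then PZ else 1)).trace)
        = if ps = δ then ((2 * 2 ^ (nrad - 1) : ℝ) : ℂ) else 0 := by
      have hterm : ∀ i : Fin nrad,
          ((Fin.addCases (fun i => pauli (ps i))
              (fun k : Fin norb => if k = (⟨0, h2⟩ : Fin norb) then Q0 else 1)
              (Fin.castAdd norb i))ᴴ *
            (if Fin.castAdd norb i = y then PZ else 1)).trace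
          = if i = y' then (if ps i = 3 then 2 else 0) else (if ps i = 0 then 2 else 0) := by
        intro i
        rw [Fin.addCases_left]
        by_cases hi : i = y'
        · rw [if_pos ((hcast i).2 hi), if_pos hi, trace_pauli_conj_Z]
        · rw [if_neg (fun h => hi ((hcast i).1 h)), if_neg hi, Matrix.mul_one, trace_pauli_conj]
      simp only [hterm]
      by_cases hps : ps = δ
      · subst hps
        rw [if_pos rfl, Fintype.prod_eq_mul_prod_compl y']
        have h1' : (if y' = y' then (if δ y' = 3 then (2:ℂ) else 0)
            else (if δ y' = 0 then 2 else 0)) = 2 := by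
          simp [hδdef]
        rw [h1']
        have h2' : ∀ i ∈ ({y'}ᶜ : Finset (Fin nrad)),
            (if i = y' then (if δ i = 3 then (2:ℂ) else 0)
              else (if δ i = 0 then 2 else 0)) = 2 := by
          intro i hi
          simp only [Finset.mem_compl, Finset.mem_singleton] at hi
          simp [hδdef, hi]
        rw [Finset.prod_congr rfl h2', Finset.prod_const, Finset.card_compl,
          Finset.card_singleton, Fintype.card_fin]
        push_cast
        ring
      · rw [if_neg hps]
        obtain ⟨i, hi⟩ := Function.ne_iff.1 hps
        apply Finset.prod_eq_zero (Finset.mem_univ i)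
        by_cases hiy : i = y'
        · rw [if_pos hiy, if_neg]
          intro h; apply hi; rw [h, hδdef]; simp [hiy]
        · rw [if_neg hiy, if_neg]
          intro h; apply hi; rw [h, hδdef]; simp [hiy]
    have horb : (∏ i : Fin norb,
        ((Fin.addCases (fun i => pauli (ps i))
            (fun k : Fin norb => if k = (⟨0, h2⟩ : Fin norb) then Q0 else 1)
            (Fin.natAdd nrad i))ᴴ *
          (if Fin.natAdd nrad i = y then PZ else 1)).trace)
        = ((s * 2 * 2 ^ (norb - 1) : ℝ) : ℂ) := by
      have hterm : ∀ i : Fin norb,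
          ((Fin.addCases (fun i => pauli (ps i))
              (fun k : Fin norb => if k = (⟨0, h2⟩ : Fin norb) then Q0 else 1)
              (Fin.natAdd nrad i))ᴴ *
            (if Fin.natAdd nrad i = y then PZ else 1)).trace
          = if i = (⟨0, h2⟩ : Fin norb) then ((s * 2 : ℝ) : ℂ) else 2 := by
        intro i
        rw [Fin.addCases_right, if_neg (hnat i), Matrix.mul_one]
        by_cases hi : i = (⟨0, h2⟩ : Fin norb)
        · rw [if_pos hi, if_pos hi, hQ0def, trace_Q0, hsdef]
          push_cast; ring
        · rw [if_neg hi, if_neg hi, Matrix.conjTranspose_one, Matrix.trace_one]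
          simp
      simp only [hterm]
      rw [Fintype.prod_eq_mul_prod_compl (⟨0, h2⟩ : Fin norb), if_pos rfl]
      have h2' : ∀ i ∈ ({(⟨0, h2⟩ : Fin norb)}ᶜ : Finset (Fin norb)),
          (if i = (⟨0, h2⟩ : Fin norb) then ((s * 2 : ℝ) : ℂ) else 2) = 2 := by
        intro i hi
        simp only [Finset.mem_compl, Finset.mem_singleton] at hi
        simp [hi]
      rw [Finset.prod_congr rfl h2', Finset.prod_const, Finset.card_compl,
        Finset.card_singleton, Fintype.card_fin]
      push_cast
      ring
    rw [hrad, horb]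
    by_cases hps : ps = δ
    · rw [if_pos hps, if_pos hps]
      rw [Complex.star_def, Complex.conj_ofReal]
      push_cast
      ring
    · rw [if_neg hps, if_neg hps, zero_mul, mul_zero]
  have hδne : tens (fun i => pauli (δ i)) ≠ 1 := by
    intro h
    have h2' : tens (fun i => pauli (δ i)) (fun _ => 1) (fun _ => 1)
        = (1 : QMat nrad) (fun _ => 1) (fun _ => 1) := by rw [h]
    rw [Matrix.one_apply_eq] at h2'
    have h3' : tens (fun i => pauli (δ i)) (fun _ => 1) (fun _ => 1) = -1 := by
      rw [show tens (fun i => pauli (δ i)) (fun _ => 1) (fun _ => 1)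
          = ∏ i : Fin nrad, pauli (δ i) 1 1 from rfl]
      have : ∀ i : Fin nrad, pauli (δ i) 1 1 = if i = y' then (-1 : ℂ) else 1 := by
        intro i
        by_cases hi : i = y' <;> simp [hδdef, hi, pauli, PZ, Matrix.one_apply]
      rw [Finset.prod_congr rfl (fun i _ => this i), Finset.prod_ite_eq' Finset.univ y'
        (fun _ => (-1 : ℂ))]
      simp
    rw [h3'] at h2'
    norm_num at h2'
  rw [Finset.sum_filter_of_ne]
  · rw [Finset.sum_eq_single δ]
    · rw [key δ, if_pos rfl, Complex.norm_real, Real.norm_eq_abs]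
      obtain ⟨a, rfl⟩ : ∃ a, nrad = a + 1 := ⟨nrad - 1, by omega⟩
      obtain ⟨b, rfl⟩ : ∃ b, norb = b + 1 := ⟨norb - 1, by omega⟩
      simp only [Nat.add_sub_cancel]
      rw [_root_.abs_of_nonneg (by positivity), hcdef, hsdef,
        show a + 1 + (b + 1) - 1 = a + b + 1 by omega]
      exact final_num a b
    · intro ps _ hne
      rw [key ps, if_neg hne]
      simp
    · intro h
      exact absurd (Finset.mem_univ δ) h
  · intro ps _ hne
    have : hsInner (Bbasis nrad norb h2 (tens fun i => pauli (ps i)) ε) (onQubit PZ y) ≠ 0 := by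
      intro h0
      rw [h0] at hne
      simp at hne
    rw [key ps] at this
    by_cases hps : ps = δ
    · rw [hps]; exact hδne
    · rw [if_neg hps] at this; exact absurd rfl this

end
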